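/- Let N ≥ 1, let P be an N×N stochastic matrix admitting a vector π with π_i > 0 for all i and Pᵀ π = π, and let λ_i > 0 with Λ := diag(λ_i). Consider the real matrix A := Λ (1 − Pᵀ). Then: (i) det A = 0 (so 0 is an eigenvalue of A, with eigenvector π); and (ii) every complex eigenvalue z of (the complexification of) A with z ≠ 0 satisfies Re z > 0. -/

import Mathlib

open Matrix

/-- Lemma of Section 6.2: for `Λ = diag(λ_i)` with `λ_i > 0` and a stochastic
matrix `P` with positive stationary vector `π`, the matrix `A = Λ(1 − Pᵀ)` is
singular (with `A π = 0`), and every nonzero complex eigenvalue of `A` has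
positive real part. -/
theorem stmt_16 (N : ℕ) (hN : 1 ≤ N)
    (P : Matrix (Fin N) (Fin N) ℝ)
    (hP0 : ∀ i j, 0 ≤ P i j) (hP1 : ∀ i, ∑ j, P i j = 1)
    (π : Fin N → ℝ) (hπ : ∀ i, 0 < π i) (hπstat : P.transpose *ᵥ π = π)
    (lam : Fin N → ℝ) (hlam : ∀ i, 0 < lam i)
    (A : Matrix (Fin N) (Fin N) ℝ)
    (hA : A = Matrix.diagonal lam * (1 - P.transpose)) :
    A.det = 0 ∧ A *ᵥ π = 0 ∧
      ∀ z : ℂ, z ≠ 0 →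
        (A.map (Complex.ofReal) - z • (1 : Matrix (Fin N) (Fin N) ℂ)).det = 0 →
        0 < z.re := by
  have hπne : π ≠ 0 := by
    intro h
    exact (hπ ⟨0, hN⟩).ne' (congrFun h ⟨0, hN⟩)
  have hAπ : A *ᵥ π = 0 := by
    rw [hA, ← mulVec_mulVec, sub_mulVec, one_mulVec, hπstat, sub_self, mulVec_zero]
  have hdet : A.det = 0 := by
    rw [← Matrix.exists_mulVec_eq_zero_iff]
    exact ⟨π, hπne, hAπ⟩
  refine ⟨hdet, hAπ, ?_⟩
  intro z hz hzdet
  set Bc : Matrix (Fin N) (Fin N) ℂ :=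
    ((1 - P.transpose) * Matrix.diagonal lam).map Complex.ofReal with hBc
  set Dc : Matrix (Fin N) (Fin N) ℂ := (Matrix.diagonal lam).map Complex.ofReal with hDc
  have hmap : ∀ (X Y : Matrix (Fin N) (Fin N) ℝ),
      (X*Y).map Complex.ofReal = X.map Complex.ofReal * Y.map Complex.ofReal :=
    fun X Y => Matrix.map_mul (f := Complex.ofRealHom)
  have hDcdiag : Dc = Matrix.diagonal (fun i => (lam i : ℂ)) := by
    rw [hDc]
    exact Matrix.diagonal_map (by simp)
  have hDcdet : Dc.det ≠ 0 := by
    rw [hDcdiag, Matrix.det_diagonal]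
    exact Finset.prod_ne_zero_iff.2 fun i _ => by exact_mod_cast (hlam i).ne'
  have hcomm : (A.map Complex.ofReal) * Dc = Dc * Bc := by
    rw [hBc, hDc, ← hmap, ← hmap, hA, mul_assoc]
  have key : (Bc - z • (1 : Matrix (Fin N) (Fin N) ℂ)).det = 0 := by
    have h1 : (A.map Complex.ofReal - z • 1) * Dc = Dc * (Bc - z • 1) := by
      rw [sub_mul, hcomm, mul_sub]
      congr 1
      rw [smul_mul_assoc, one_mul, mul_smul_comm, mul_one]
    have h2 := congrArg Matrix.det h1
    rw [Matrix.det_mul, Matrix.det_mul, hzdet, zero_mul] at h2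
    exact (mul_eq_zero.1 h2.symm).resolve_left hDcdet
  obtain ⟨v, hvne, hv⟩ := (Matrix.exists_vecMul_eq_zero_iff).2 key
  obtain ⟨k, -, hk⟩ := Finset.exists_max_image Finset.univ (fun i => ‖v i‖)
    ⟨⟨0, hN⟩, Finset.mem_univ _⟩
  have hvk : 0 < ‖v k‖ := by
    rcases Function.ne_iff.1 hvne with ⟨i, hi⟩
    exact lt_of_lt_of_le (by simpa using hi) (hk i (Finset.mem_univ i))
  have hBent : ∀ i j, Bc i j =
      ((((1 : Matrix (Fin N) (Fin N) ℝ) i j - P j i) * lam j : ℝ) : ℂ) := by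
    intro i j
    rw [hBc]
    simp [Matrix.mul_diagonal, Matrix.sub_apply, Matrix.transpose_apply]
  have heq : ∑ i, v i * Bc i k = z * v k := by
    have h0 := congrFun hv k
    simp only [Matrix.vecMul, dotProduct, Matrix.sub_apply, Matrix.smul_apply,
      Matrix.one_apply, Pi.zero_apply, smul_eq_mul] at h0
    simp only [mul_sub] at h0
    rw [Finset.sum_sub_distrib, sub_eq_zero] at h0
    rw [h0, Finset.sum_eq_single k] <;> simp +contextual [mul_comm]
  -- Gershgorin column bound
  set c : ℝ := lam k * (1 - P k k) with hc
  have hPkk : P k k ≤ 1 := by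
    rw [← hP1 k]
    exact Finset.single_le_sum (fun j _ => hP0 k j) (Finset.mem_univ k)
  have hc0 : 0 ≤ c := mul_nonneg (hlam k).le (by linarith)
  have hBkk : Bc k k = (c : ℂ) := by
    rw [hBent k k, Matrix.one_apply_eq, hc]
    push_cast
    ring
  have heq2 : (z - (c:ℂ)) * v k = ∑ i ∈ Finset.univ.erase k, v i * Bc i k := by
    have h3 : v k * Bc k k + ∑ i ∈ Finset.univ.erase k, v i * Bc i k = ∑ i, v i * Bc i k :=
      Finset.add_sum_erase Finset.univ (fun i => v i * Bc i k) (Finset.mem_univ k)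
    rw [← h3, hBkk] at heq
    linear_combination -heq
  have h4 : ‖z - (c:ℂ)‖ * ‖v k‖ ≤ c * ‖v k‖ := by
    calc ‖z - (c:ℂ)‖ * ‖v k‖
        = ‖(z - (c:ℂ)) * v k‖ := (norm_mul _ _).symm
      _ = ‖∑ i ∈ Finset.univ.erase k, v i * Bc i k‖ := by rw [heq2]
      _ ≤ ∑ i ∈ Finset.univ.erase k, ‖v i * Bc i k‖ := norm_sum_le _ _
      _ ≤ ∑ i ∈ Finset.univ.erase k, ‖v k‖ * (P k i * lam k) := by
          refine Finset.sum_le_sum fun i hi => ?_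
          have hik : i ≠ k := Finset.ne_of_mem_erase hi
          rw [norm_mul, hBent i k]
          have habs : ‖(((((1 : Matrix (Fin N) (Fin N) ℝ) i k - P k i) * lam k : ℝ)) : ℂ)‖
              = P k i * lam k := by
            rw [Complex.norm_real, Real.norm_eq_abs, Matrix.one_apply_ne hik, zero_sub, abs_mul, abs_neg,
              abs_of_nonneg (hP0 k i), abs_of_nonneg (hlam k).le]
          rw [habs]
          exact mul_le_mul_of_nonneg_right (hk i (Finset.mem_univ i))
            (mul_nonneg (hP0 k i) (hlam k).le)
      _ = c * ‖v k‖ := by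
          rw [← Finset.mul_sum, ← Finset.sum_mul,
            Finset.sum_erase_eq_sub (Finset.mem_univ k), hP1 k, hc]
          ring
  have h5 : ‖z - (c:ℂ)‖ ≤ c := le_of_mul_le_mul_right h4 hvk
  have h6 : (‖z - (c:ℂ)‖)^2 ≤ c^2 :=
    pow_le_pow_left₀ (norm_nonneg _) h5 2
  rw [Complex.sq_norm, Complex.normSq_apply, Complex.sub_re, Complex.sub_im,
    Complex.ofReal_re, Complex.ofReal_im] at h6
  have hz2 : 0 < z.re * z.re + z.im * z.im := by
    have := Complex.normSq_pos.2 hz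
    rwa [Complex.normSq_apply] at this
  nlinarith [h6, hz2, hc0]
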